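/- Let n, N, M be positive integers. Let g = [[A, B],[C, D]] (block decomposition into n×n blocks) be a matrix in Sp(2n, ℤ), i.e. an integer 2n×2n matrix with ᵗg J g = J where J = [[0, 1ₙ],[−1ₙ, 0]], and suppose every entry of C is divisible by N M². Let S be a symmetric n×n integer matrix, and set S̃ := ᵗD S D (also a symmetric integer matrix). Then the matrix g̃ := [[1ₙ, S/M],[0, 1ₙ]] · g · [[1ₙ, S̃/M],[0, 1ₙ]]⁻¹, computed in GL(2n, ℚ), has integer entries and lies in Sp(2n, ℤ); moreover its lower-left n×n block equals C (in particular is divisible by N), and its lower-right n×n block is congruent to D modulo M. -/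

import Mathlib

open Matrix

section aux
variable {m : Type*} [Fintype m] [DecidableEq m]

lemma aux13_map_mul (X Y : Matrix m m ℤ) :
    (X * Y).map (fun x : ℤ => (x : ℚ)) =
      X.map (fun x : ℤ => (x : ℚ)) * Y.map (fun x : ℤ => (x : ℚ)) :=
  Matrix.map_mul (f := Int.castRingHom ℚ)

lemma aux13_map_add (X Y : Matrix m m ℤ) :
    (X + Y).map (fun x : ℤ => (x : ℚ)) =
      X.map (fun x : ℤ => (x : ℚ)) + Y.map (fun x : ℤ => (x : ℚ)) := by
  ext i j; simp

lemma aux13_map_sub (X Y : Matrix m m ℤ) :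
    (X - Y).map (fun x : ℤ => (x : ℚ)) =
      X.map (fun x : ℤ => (x : ℚ)) - Y.map (fun x : ℤ => (x : ℚ)) := by
  ext i j; simp

lemma aux13_map_one :
    ((1 : Matrix m m ℤ)).map (fun x : ℤ => (x : ℚ)) = 1 := by
  ext i j; by_cases h : i = j <;> simp [Matrix.one_apply, h]

lemma aux13_map_neg (X : Matrix m m ℤ) :
    ((-X)).map (fun x : ℤ => (x : ℚ)) = -(X.map (fun x : ℤ => (x : ℚ))) := by
  ext i j; simp

lemma aux13_map_zero :
    ((0 : Matrix m m ℤ)).map (fun x : ℤ => (x : ℚ)) = 0 := by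
  ext i j; simp

lemma aux13_map_transpose (X : Matrix m m ℤ) :
    (Xᵀ).map (fun x : ℤ => (x : ℚ)) = (X.map (fun x : ℤ => (x : ℚ)))ᵀ := by
  ext i j; simp

lemma aux13_map_smul (z : ℤ) (X : Matrix m m ℤ) :
    ((z • X)).map (fun x : ℤ => (x : ℚ)) = (z : ℚ) • X.map (fun x : ℤ => (x : ℚ)) := by
  ext i j
  simp only [Matrix.map_apply, Matrix.smul_apply, smul_eq_mul]
  push_cast; ring

lemma aux13_symp {R : Type*} [CommRing R] (Jm P Q : Matrix m m R)
    (hP : Pᵀ * Jm * P = Jm) (hQ : Qᵀ * Jm * Q = Jm) :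
    (P * Q)ᵀ * Jm * (P * Q) = Jm := by
  rw [Matrix.transpose_mul]
  have h : Qᵀ * (Pᵀ * Jm * P) * Q = Qᵀ * Pᵀ * Jm * (P * Q) := by
    simp only [Matrix.mul_assoc]
  rw [← h, hP, hQ]

end aux

theorem stmt_13 (n N M : ℕ) (hn : 0 < n) (hN : 0 < N) (hM : 0 < M)
    (A B C D : Matrix (Fin n) (Fin n) ℤ)
    (hsymp : (fromBlocks A B C D)ᵀ * fromBlocks 0 1 (-1) 0 * fromBlocks A B C D
      = fromBlocks 0 1 (-1) 0)
    (hC : ∀ i j, ((N : ℤ) * (M : ℤ) ^ 2) ∣ C i j)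
    (S : Matrix (Fin n) (Fin n) ℤ) (hS : Sᵀ = S) :
    ∃ G : Matrix (Fin n ⊕ Fin n) (Fin n ⊕ Fin n) ℤ,
      G.map (fun x : ℤ => (x : ℚ)) =
        fromBlocks 1 ((M : ℚ)⁻¹ • S.map (fun x : ℤ => (x : ℚ))) 0 1 *
          (fromBlocks A B C D).map (fun x : ℤ => (x : ℚ)) *
          (fromBlocks 1 ((M : ℚ)⁻¹ • (Dᵀ * S * D).map (fun x : ℤ => (x : ℚ))) 0 1)⁻¹ ∧
      Gᵀ * fromBlocks 0 1 (-1) 0 * G = fromBlocks 0 1 (-1) 0 ∧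
      G.toBlocks₂₁ = C ∧
      (∀ i j, (N : ℤ) ∣ G.toBlocks₂₁ i j) ∧
      (∀ i j, (M : ℤ) ∣ (G.toBlocks₂₂ i j - D i j)) := by
  have hMQ : (M:ℚ) ≠ 0 := Nat.cast_ne_zero.mpr hM.ne'
  choose C' hC' using hC
  set E : Matrix (Fin n) (Fin n) ℤ := Matrix.of C' with hE
  have hCE : C = ((N:ℤ) * (M:ℤ)^2) • E := by ext i j; simpa [hE] using hC' i j
  set g : Matrix (Fin n ⊕ Fin n) (Fin n ⊕ Fin n) ℤ := fromBlocks A B C D with hg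
  set J : Matrix (Fin n ⊕ Fin n) (Fin n ⊕ Fin n) ℤ := fromBlocks 0 1 (-1) 0 with hJ
  have hJJ : J * -J = 1 := by
    simp [hJ, fromBlocks_multiply, ← fromBlocks_one, fromBlocks_neg]
  have hnJJ : -J * J = 1 := by
    simpa [neg_mul, mul_neg] using hJJ
  have hleft : (-J * gᵀ * J) * g = 1 := by
    calc (-J * gᵀ * J) * g = -J * (gᵀ * J * g) := by noncomm_ring
    _ = 1 := by rw [hsymp]; exact hnJJ
  have hright : g * (-J * gᵀ * J) = 1 := mul_eq_one_comm.mp hleft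
  have hgJg : g * J * gᵀ = J := by
    have h2 : g * -J * gᵀ * J = 1 := by
      calc g * -J * gᵀ * J = g * (-J * gᵀ * J) := by noncomm_ring
      _ = 1 := hright
    have h3 := congrArg (· * -J) h2
    simp only [mul_assoc, hJJ, mul_one, one_mul] at h3
    have : g * (J * gᵀ) = J := by
      have := congrArg Neg.neg h3
      simpa [neg_mul, mul_neg] using this
    simpa [mul_assoc] using this
  have key : A * Dᵀ = 1 + B * Cᵀ := by
    have h := congrArg Matrix.toBlocks₁₂ hgJg
    simp only [hg, hJ, fromBlocks_multiply, fromBlocks_transpose,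
      Matrix.toBlocks_fromBlocks₁₂, Matrix.mul_zero, Matrix.mul_one, Matrix.mul_neg,
      Matrix.zero_mul, Matrix.one_mul, zero_add, add_zero, Matrix.neg_mul] at h
    linear_combination (norm := noncomm_ring) h
  -- the integral matrix G
  set A' : Matrix (Fin n) (Fin n) ℤ := A + ((N:ℤ) * (M:ℤ)) • (S * E) with hA'
  set B' : Matrix (Fin n) (Fin n) ℤ :=
    B - ((N:ℤ) * (M:ℤ)) • (B * Eᵀ * S * D) - (N:ℤ) • (S * E * (Dᵀ * S * D)) with hB'
  set D' : Matrix (Fin n) (Fin n) ℤ := D - ((N:ℤ) * (M:ℤ)) • (E * (Dᵀ * S * D)) with hD'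
  -- ℚ-side abbreviations
  have hCQ : C.map (fun x : ℤ => (x : ℚ)) = (((N:ℚ) * (M:ℚ)^2)) • E.map (fun x : ℤ => (x : ℚ)) := by
    rw [hCE, aux13_map_smul]; push_cast; rfl
  have keyQ : A.map (fun x : ℤ => (x : ℚ)) * (D.map (fun x : ℤ => (x : ℚ)))ᵀ
      = 1 + (((N:ℚ) * (M:ℚ)^2)) • (B.map (fun x : ℤ => (x : ℚ)) * (E.map (fun x : ℤ => (x : ℚ)))ᵀ) := by
    have h := congrArg (fun X => Matrix.map X (fun x : ℤ => (x : ℚ))) key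
    simp only [aux13_map_mul, aux13_map_add, aux13_map_one, aux13_map_transpose] at h
    rw [h, hCQ]
    simp [Matrix.transpose_smul, mul_smul_comm]
  -- inverse of the unipotent block matrix
  have hinv : (fromBlocks (1 : Matrix (Fin n) (Fin n) ℚ)
        ((M : ℚ)⁻¹ • (Dᵀ * S * D).map (fun x : ℤ => (x : ℚ))) (0 : Matrix (Fin n) (Fin n) ℚ) 1)⁻¹
      = fromBlocks 1 (-((M : ℚ)⁻¹ • (Dᵀ * S * D).map (fun x : ℤ => (x : ℚ)))) 0 1 := by
    apply inv_eq_right_inv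
    simp [fromBlocks_multiply, ← fromBlocks_one]
  have hmap : (fromBlocks A' B' C D').map (fun x : ℤ => (x : ℚ)) =
      fromBlocks 1 ((M : ℚ)⁻¹ • S.map (fun x : ℤ => (x : ℚ))) 0 1 *
        g.map (fun x : ℤ => (x : ℚ)) *
        fromBlocks 1 (-((M : ℚ)⁻¹ • (Dᵀ * S * D).map (fun x : ℤ => (x : ℚ)))) 0 1 := by
    rw [hg]
    simp only [fromBlocks_map, fromBlocks_multiply]
    rw [fromBlocks_inj]
    have hDSD : (Dᵀ * S * D).map (fun x : ℤ => (x : ℚ)) = (D.map (fun x : ℤ => (x : ℚ)))ᵀ * S.map (fun x : ℤ => (x : ℚ)) * D.map (fun x : ℤ => (x : ℚ)) := by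
      simp only [aux13_map_mul, aux13_map_transpose]
    refine ⟨?_, ?_, ?_, ?_⟩
    · rw [hA']
      simp only [aux13_map_add, aux13_map_smul, aux13_map_mul, aux13_map_transpose]
      rw [hCQ]
      push_cast
      simp only [Matrix.one_mul, Matrix.zero_mul, Matrix.mul_one, Matrix.mul_zero,
        add_zero, zero_add, smul_mul_assoc, mul_smul_comm, smul_smul]
      match_scalars <;> field_simp <;> ring
    · rw [hB', hDSD]
      simp only [aux13_map_sub, aux13_map_smul, aux13_map_mul, aux13_map_transpose]
      rw [hCQ]
      push_cast
      simp only [Matrix.one_mul, Matrix.zero_mul, Matrix.mul_one, Matrix.mul_zero,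
        add_zero, zero_add, mul_add, add_mul, mul_neg, neg_mul, smul_mul_assoc,
        mul_smul_comm, smul_smul, smul_neg, ← Matrix.mul_assoc]
      rw [keyQ]
      simp only [mul_add, add_mul, Matrix.one_mul, smul_mul_assoc, mul_smul_comm, smul_smul,
        ← Matrix.mul_assoc]
      match_scalars <;> field_simp <;> first | ring1 | (left; ring1)
    · rw [hCQ]
      simp only [Matrix.one_mul, Matrix.zero_mul, Matrix.mul_one, Matrix.mul_zero,
        add_zero, zero_add]
    · rw [hD', hDSD]
      simp only [aux13_map_sub, aux13_map_smul, aux13_map_mul, aux13_map_transpose]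
      rw [hCQ]
      push_cast
      simp only [Matrix.one_mul, Matrix.zero_mul, Matrix.mul_one, Matrix.mul_zero,
        add_zero, zero_add, smul_mul_assoc, mul_smul_comm, smul_smul, mul_neg, smul_neg,
        ← Matrix.mul_assoc]
      match_scalars <;> field_simp <;> ring
  set JQ : Matrix (Fin n ⊕ Fin n) (Fin n ⊕ Fin n) ℚ := fromBlocks 0 1 (-1) 0 with hJQdef
  have hJQ : J.map (fun x : ℤ => (x : ℚ)) =
      JQ := by
    rw [hJ]
    simp only [fromBlocks_map, aux13_map_one, aux13_map_zero, aux13_map_neg, hJQdef]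
  have hgq : (g.map (fun x : ℤ => (x : ℚ)))ᵀ * JQ *
      g.map (fun x : ℤ => (x : ℚ)) = JQ := by
    have h := congrArg (fun X => Matrix.map X (fun x : ℤ => (x : ℚ))) hsymp
    beta_reduce at h
    simp only [aux13_map_mul, aux13_map_transpose, hJQ] at h
    exact h
  have hU : ∀ X : Matrix (Fin n) (Fin n) ℚ, Xᵀ = X →
      (fromBlocks (1 : Matrix (Fin n) (Fin n) ℚ) X 0 1)ᵀ *
          JQ *
        fromBlocks (1 : Matrix (Fin n) (Fin n) ℚ) X 0 1 = JQ := by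
    intro X hX
    rw [fromBlocks_transpose]
    simp [hJQdef, fromBlocks_multiply, hX]
  have hXsym : ((M : ℚ)⁻¹ • S.map (fun x : ℤ => (x : ℚ)))ᵀ
      = (M : ℚ)⁻¹ • S.map (fun x : ℤ => (x : ℚ)) := by
    rw [Matrix.transpose_smul, ← aux13_map_transpose, hS]
  have hDSDsym : (Dᵀ * S * D)ᵀ = Dᵀ * S * D := by
    calc (Dᵀ * S * D)ᵀ = Dᵀ * (Sᵀ * D) := by
          simp [Matrix.transpose_mul, Matrix.mul_assoc]
    _ = Dᵀ * S * D := by rw [hS, Matrix.mul_assoc]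
  have hX2sym : (-((M : ℚ)⁻¹ • (Dᵀ * S * D).map (fun x : ℤ => (x : ℚ))))ᵀ
      = -((M : ℚ)⁻¹ • (Dᵀ * S * D).map (fun x : ℤ => (x : ℚ))) := by
    rw [Matrix.transpose_neg, Matrix.transpose_smul, ← aux13_map_transpose, hDSDsym]
  refine ⟨fromBlocks A' B' C D', ?_, ?_, ?_, ?_, ?_⟩
  · rw [hinv]
    exact hmap
  · apply Matrix.map_injective (f := fun x : ℤ => (x : ℚ))
      (fun a b h => Int.cast_injective h)
    show ((fromBlocks A' B' C D')ᵀ * J * fromBlocks A' B' C D').map (fun x : ℤ => (x : ℚ))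
      = J.map (fun x : ℤ => (x : ℚ))
    simp only [aux13_map_mul, aux13_map_transpose] at hX2sym
    simp only [aux13_map_mul, aux13_map_transpose, hJQ, hmap]
    exact aux13_symp _ _ _ (aux13_symp _ _ _ (hU _ hXsym) hgq) (hU _ hX2sym)
  · simp [Matrix.toBlocks_fromBlocks₂₁]
  · intro i j
    simp only [Matrix.toBlocks_fromBlocks₂₁]
    exact dvd_trans (dvd_mul_right _ _) (Dvd.intro _ (hC' i j).symm)
  · intro i j
    simp only [Matrix.toBlocks_fromBlocks₂₂, hD', Matrix.sub_apply, Matrix.smul_apply]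
    refine ⟨-((N:ℤ) * (E * (Dᵀ * S * D)) i j), ?_⟩
    simp only [smul_eq_mul]
    ring
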